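/- Let n ≥ 2 and let A be an n×n irreducible 0-1 matrix that is not permutation similar to the basic circulant matrix C_n. Then θ(A) ≤ n; that is, there exists a positive integer m ≤ n such that A^{m+1} is not a 0-1 matrix. -/
import Mathlib


/-- A matrix over ℕ is a 0-1 matrix iff all its entries are at most 1. -/
def IsZO {α β : Type*} (A : Matrix α β ℕ) : Prop := ∀ i j, A i j ≤ 1

/-- The stable index of a 0-1 matrix: the smallest positive `k` with `A ^ (k+1)`
not a 0-1 matrix, or `⊤` if no such `k` exists. -/
noncomputable def theta {α : Type*} [Fintype α] [DecidableEq α]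
    (A : Matrix α α ℕ) : ℕ∞ :=
  sInf ((fun k : ℕ => (k : ℕ∞)) '' {k : ℕ | 1 ≤ k ∧ ¬ IsZO (A ^ (k + 1))})

/-- `g(n)` from the paper. -/
def g (n : ℕ) : ℕ :=
  if n % 2 = 1 then (n ^ 2 - 1) / 4
  else if n % 4 = 0 then (n ^ 2 - 4) / 4
  else (n ^ 2 - 16) / 4

/-- Basic circulant 0-1 matrix of order `n`. -/
def Cmat (n : ℕ) : Matrix (Fin n) (Fin n) ℕ :=
  Matrix.of fun i j => if (j : ℕ) = ((i : ℕ) + 1) % n then 1 else 0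

/-- Condition (★) on `(n, p, q)`. -/
def StarCond (n p q : ℕ) : Prop :=
  p + q = n ∧
  ((n % 2 = 1 ∧ ({p, q} : Finset ℕ) = {(n + 1) / 2, (n - 1) / 2}) ∨
   (n % 4 = 0 ∧ ({p, q} : Finset ℕ) = {(n + 2) / 2, (n - 2) / 2}) ∨
   (n % 4 = 2 ∧ ({p, q} : Finset ℕ) = {(n + 4) / 2, (n - 4) / 2}))

namespace Stmt6Aux


variable {n : ℕ} (A : Matrix (Fin n) (Fin n) ℕ)

lemma entry_mul_le (s t : ℕ) (x y z : Fin n) :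
    (A ^ s) x y * (A ^ t) y z ≤ (A ^ (s + t)) x z := by
  rw [pow_add, Matrix.mul_apply]
  exact Finset.single_le_sum (f := fun v => (A ^ s) x v * (A ^ t) v z)
    (fun i _ => Nat.zero_le _) (Finset.mem_univ y)

lemma pos_trans {s t : ℕ} {x z : Fin n} (y : Fin n)
    (h1 : 0 < (A ^ s) x y) (h2 : 0 < (A ^ t) y z) : 0 < (A ^ (s + t)) x z :=
  lt_of_lt_of_le (Nat.mul_pos h1 h2) (entry_mul_le A s t x y z)

def IsWalk (c : ℕ → Fin n) (t : ℕ) : Prop := ∀ s < t, 0 < A (c s) (c (s + 1))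

lemma walk_of_pos : ∀ (t : ℕ) (x y : Fin n), 0 < (A ^ t) x y →
    ∃ c : ℕ → Fin n, c 0 = x ∧ c t = y ∧ IsWalk A c t := by
  intro t
  induction t with
  | zero =>
    intro x y h
    rw [pow_zero] at h
    have hxy : x = y := by
      by_contra hne
      rw [Matrix.one_apply_ne hne] at h
      exact lt_irrefl 0 h
    exact ⟨fun _ => x, rfl, hxy ▸ rfl, fun s hs => absurd hs (Nat.not_lt_zero s)⟩
  | succ t ih =>
    intro x y h
    rw [pow_succ', Matrix.mul_apply] at h
    have : ∃ u ∈ Finset.univ, A x u * (A ^ t) u y ≠ 0 :=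
      Finset.exists_ne_zero_of_sum_ne_zero (Nat.pos_iff_ne_zero.mp h)
    obtain ⟨u, -, hu⟩ := this
    have h1 : 0 < A x u := Nat.pos_of_ne_zero (fun h0 => hu (by rw [h0, zero_mul]))
    have h2 : 0 < (A ^ t) u y := Nat.pos_of_ne_zero (fun h0 => hu (by rw [h0, mul_zero]))
    obtain ⟨c, hc0, hct, hcw⟩ := ih u y h2
    refine ⟨fun s => if s = 0 then x else c (s - 1), by simp, by simp [hct], ?_⟩
    intro s hs
    rcases Nat.eq_zero_or_pos s with rfl | hspos
    · simpa [hc0] using h1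
    · have h1s : ¬ (s = 0) := Nat.pos_iff_ne_zero.mp hspos
      have : s - 1 + 1 = s := Nat.succ_pred_eq_of_pos hspos
      simp only [h1s, if_false, Nat.succ_ne_zero, Nat.add_sub_cancel]
      have hh := hcw (s - 1) (by omega)
      rwa [this] at hh
      
lemma pos_of_walk : ∀ (t : ℕ) (c : ℕ → Fin n), IsWalk A c t → 0 < (A ^ t) (c 0) (c t) := by
  intro t
  induction t with
  | zero => intro c _; simp [Matrix.one_apply]
  | succ t ih =>
    intro c hw
    have h1 : 0 < (A ^ 1) (c 0) (c 1) := by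
      rw [pow_one]; exact hw 0 (Nat.succ_pos t)
    have h2 : 0 < (A ^ t) (c 1) (c (t + 1)) := by
      have := ih (fun s => c (s + 1)) (fun s hs => hw (s + 1) (by omega))
      simpa using this
    have := pos_trans A (c 1) h1 h2
    rwa [Nat.add_comm] at this

lemma walk_segment {c : ℕ → Fin n} {t : ℕ} (hc : IsWalk A c t) {s1 s2 : ℕ}
    (h12 : s1 ≤ s2) (h2t : s2 ≤ t) : 0 < (A ^ (s2 - s1)) (c s1) (c s2) := by
  have := pos_of_walk A (s2 - s1) (fun s => c (s1 + s))
    (fun s hs => hc (s1 + s) (by omega))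
  simpa [Nat.add_sub_cancel' h12] using this


lemma find_walk_inj {x y : Fin n} (h : ∃ k, 0 < (A ^ k) x y) :
    ∃ c : ℕ → Fin n, c 0 = x ∧ c (Nat.find h) = y ∧ IsWalk A c (Nat.find h) ∧
      ∀ s1 s2, s1 ≤ Nat.find h → s2 ≤ Nat.find h → c s1 = c s2 → s1 = s2 := by
  obtain ⟨c, hc0, hct, hcw⟩ := walk_of_pos A (Nat.find h) x y (Nat.find_spec h)
  refine ⟨c, hc0, hct, hcw, ?_⟩
  have key : ∀ s1 s2, s1 < s2 → s2 ≤ Nat.find h → c s1 = c s2 → False := by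
    intro s1 s2 h12 h2t heq
    have p1 : 0 < (A ^ (s1 - 0)) (c 0) (c s1) :=
      walk_segment A hcw (Nat.zero_le s1) (by omega)
    have p2 : 0 < (A ^ (Nat.find h - s2)) (c s2) (c (Nat.find h)) :=
      walk_segment A hcw h2t (le_refl _)
    rw [← heq] at p2
    have p3 := pos_trans A (c s1) p1 p2
    rw [hc0, hct] at p3
    exact Nat.find_min h (by omega) p3
  intro s1 s2 h1 h2 heq
  rcases lt_trichotomy s1 s2 with hlt | heqq | hgt
  · exact absurd heq (fun he => key s1 s2 hlt h2 he)
  · exact heqq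
  · exact absurd heq.symm (fun he => key s2 s1 hgt h1 he)

lemma two_le_sum {f : Fin n → ℕ} {a b : Fin n} (hab : a ≠ b)
    (ha : 0 < f a) (hb : 0 < f b) : 2 ≤ ∑ v, f v := by
  have hsub : ({a, b} : Finset (Fin n)) ⊆ Finset.univ := Finset.subset_univ _
  have := Finset.sum_le_sum_of_subset (f := f) hsub
  rw [Finset.sum_pair hab] at this
  omega

lemma first_step {x y : Fin n} {k : ℕ} (hk : 0 < k) (h : 0 < (A ^ k) x y) :
    ∃ u, 0 < A x u := by
  obtain ⟨c, hc0, hct, hcw⟩ := walk_of_pos A k x y h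
  exact ⟨c 1, hc0 ▸ hcw 0 hk⟩

end Stmt6Aux


theorem stmt_6 (n : ℕ) (hn : 2 ≤ n) (A : Matrix (Fin n) (Fin n) ℕ)
    (hA : IsZO A)
    (hirr : ∀ i j : Fin n, ∃ k : ℕ, 0 < k ∧ 0 < (A ^ k) i j)
    (hnc : ¬ ∃ e : Equiv.Perm (Fin n), A = (Cmat n).submatrix e e) :
    ∃ m : ℕ, 1 ≤ m ∧ m ≤ n ∧ ¬ IsZO (A ^ (m + 1)) := by
  classical
  open Stmt6Aux in
  by_cases hloop : ∃ i, 0 < A i i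
  · -- loop case
    obtain ⟨i, hii⟩ := hloop
    have hne : ∃ a1, a1 ≠ i ∧ 0 < A i a1 := by
      by_contra hno
      push_neg at hno
      have claim : ∀ k, ∀ v : Fin n, v ≠ i → (A ^ k) i v = 0 := by
        intro k
        induction k with
        | zero => intro v hv; rw [pow_zero]; exact Matrix.one_apply_ne (Ne.symm hv)
        | succ k ih =>
          intro v hv
          rw [pow_succ', Matrix.mul_apply]
          apply Finset.sum_eq_zero
          intro u _
          by_cases hu : u = i
          · rw [hu, ih v hv, mul_zero]
          · have hz : A i u = 0 := by
              have := hno u hu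
              omega
            rw [hz, zero_mul]
      obtain ⟨v, hv⟩ := Fintype.exists_ne_of_one_lt_card (by simp; omega) i
      obtain ⟨k, hk, hkpos⟩ := hirr i v
      rw [claim k v hv] at hkpos
      exact lt_irrefl 0 hkpos
    obtain ⟨a1, ha1, hia1⟩ := hne
    have h1 : ∃ k, 0 < (A ^ k) a1 i := by
      obtain ⟨k, _, hk⟩ := hirr a1 i; exact ⟨k, hk⟩
    have hdpos : 1 ≤ Nat.find h1 := by
      rcases Nat.eq_zero_or_pos (Nat.find h1) with h0 | h
      · exfalso
        have hsp := Nat.find_spec h1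
        rw [h0, pow_zero] at hsp
        rw [Matrix.one_apply_ne ha1] at hsp
        exact lt_irrefl 0 hsp
      · exact h
    set d := Nat.find h1 with hd
    obtain ⟨c, hc0, hcd, hcw, hcinj⟩ := find_walk_inj A h1
    have hdn : d + 1 ≤ n := by
      have hF : Function.Injective (fun r : Fin (d+1) => c (r : ℕ)) := by
        intro r s hrs
        exact Fin.ext (hcinj _ _ (by omega) (by omega) hrs)
      have := Fintype.card_le_of_injective _ hF
      simpa using this
    have pii : 0 < (A ^ d) i i := by
      have := pos_of_walk A d (fun _ => i) (fun s _ => hii)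
      simpa using this
    have pai : 0 < (A ^ d) a1 i := Nat.find_spec h1
    have h2 : 2 ≤ (A ^ (d + 1)) i i := by
      rw [pow_succ', Matrix.mul_apply]
      exact two_le_sum (Ne.symm ha1) (Nat.mul_pos hii pii) (Nat.mul_pos hia1 pai)
    refine ⟨d, hdpos, by omega, fun hz => ?_⟩
    have := hz i i
    omega
  · -- no loops
    push_neg at hloop
    have hnl : ∀ i, A i i = 0 := fun i => by have := hloop i; omega
    by_cases hbr : ∃ i a1 a2 : Fin n, a1 ≠ a2 ∧ 0 < A i a1 ∧ 0 < A i a2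
    · -- branching case
      obtain ⟨i, a1, a2, h12, hA1, hA2⟩ := hbr
      have ha1i : a1 ≠ i := fun h => by rw [h] at hA1; rw [hnl i] at hA1; exact lt_irrefl 0 hA1
      have ha2i : a2 ≠ i := fun h => by rw [h] at hA2; rw [hnl i] at hA2; exact lt_irrefl 0 hA2
      have h1 : ∃ k, 0 < (A ^ k) a1 i := by
        obtain ⟨k, _, hk⟩ := hirr a1 i; exact ⟨k, hk⟩
      have h2 : ∃ k, 0 < (A ^ k) a2 i := by
        obtain ⟨k, _, hk⟩ := hirr a2 i; exact ⟨k, hk⟩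
      set d1 := Nat.find h1 with hd1
      set d2 := Nat.find h2 with hd2
      obtain ⟨u, hu0, hud, huw, huinj⟩ := find_walk_inj A h1
      obtain ⟨z, hz0, hzd, hzw, hzinj⟩ := find_walk_inj A h2
      set S2 : Finset (Fin n) := (Finset.range (d2 + 1)).image z with hS2
      have hQ : ∃ s, s ≤ d1 ∧ u s ∈ S2 := by
        refine ⟨d1, le_refl _, ?_⟩
        rw [hud, ← hzd]
        exact Finset.mem_image.mpr ⟨d2, Finset.mem_range.mpr (by omega), rfl⟩
      set t := Nat.find hQ with ht
      obtain ⟨htd1, htS2⟩ := Nat.find_spec hQ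
      obtain ⟨s₀, hs₀r, hzs₀⟩ := Finset.mem_image.mp htS2
      have hs₀ : s₀ ≤ d2 := by
        have := Finset.mem_range.mp hs₀r; omega
      set w := u t with hw
      have hcard2 : S2.card = d2 + 1 := by
        rw [hS2, Finset.card_image_of_injOn, Finset.card_range]
        intro p hp q hq hpq
        exact hzinj p q (by have := Finset.mem_range.mp hp; omega)
          (by have := Finset.mem_range.mp hq; omega) hpq
      set S1 : Finset (Fin n) := (Finset.range t).image u with hS1
      have hcard1 : S1.card = t := by
        rw [hS1, Finset.card_image_of_injOn, Finset.card_range]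
        intro p hp q hq hpq
        exact huinj p q (by have := Finset.mem_range.mp hp; omega)
          (by have := Finset.mem_range.mp hq; omega) hpq
      have hdisj : Disjoint S1 S2 := by
        rw [Finset.disjoint_left]
        intro a haS1 haS2
        obtain ⟨p, hp, hpa⟩ := Finset.mem_image.mp haS1
        have hpt : p < t := Finset.mem_range.mp hp
        exact Nat.find_min hQ hpt ⟨by omega, by rw [hpa]; exact haS2⟩
      have hcount : t + d2 + 1 ≤ n := by
        have h3 := Finset.card_union_of_disjoint hdisj
        have h4 : (S1 ∪ S2).card ≤ n := by
          have := Finset.card_le_univ (S1 ∪ S2)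
          simpa using this
        omega
      set m := t + d2 + 1 with hm
      have pu : 0 < (A ^ t) a1 w := by
        have := walk_segment A huw (Nat.zero_le t) htd1
        rw [hu0] at this
        simpa using this
      have pz1 : 0 < (A ^ s₀) a2 w := by
        have := walk_segment A hzw (Nat.zero_le s₀) hs₀
        rw [hz0, hzs₀] at this
        simpa using this
      have pz2 : 0 < (A ^ (d2 - s₀)) w i := by
        have := walk_segment A hzw hs₀ (le_refl d2)
        rwa [hzd, hzs₀] at this
      have pia1 : 0 < (A ^ 1) i a1 := by rwa [pow_one]
      have pia2 : 0 < (A ^ 1) i a2 := by rwa [pow_one]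
      have pm1 : 0 < (A ^ m) a1 w := by
        have e1 := pos_trans A w pu pz2
        have e2 := pos_trans A i e1 pia2
        have e3 := pos_trans A a2 e2 pz1
        have hexp : t + (d2 - s₀) + 1 + s₀ = m := by omega
        rwa [hexp] at e3
      have pm2 : 0 < (A ^ m) a2 w := by
        have e1 := pos_trans A w pz1 pz2
        have e2 := pos_trans A i e1 pia1
        have e3 := pos_trans A a1 e2 pu
        have hexp : s₀ + (d2 - s₀) + 1 + t = m := by omega
        rwa [hexp] at e3
      have hfin : 2 ≤ (A ^ (m + 1)) i w := by
        rw [pow_succ', Matrix.mul_apply]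
        exact two_le_sum h12 (Nat.mul_pos hA1 pm1) (Nat.mul_pos hA2 pm2)
      refine ⟨m, by omega, by omega, fun hz => ?_⟩
      have := hz i w
      omega
    · -- functional case
      exfalso
      push_neg at hbr
      have huniq' : ∀ i j k : Fin n, 0 < A i j → 0 < A i k → j = k := by
        intro i j k hj hk
        by_contra hne
        have := hbr i j k hne hj
        omega
      have hout : ∀ i : Fin n, ∃ j, 0 < A i j := by
        intro i
        obtain ⟨k, hk, hpos⟩ := hirr i i
        exact first_step A hk hpos
      set σ : Fin n → Fin n := fun i => (hout i).choose with hσdef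
      have hσ : ∀ i, 0 < A i (σ i) := fun i => (hout i).choose_spec
      have huniq : ∀ i j, 0 < A i j → j = σ i := fun i j hj => huniq' i j (σ i) hj (hσ i)
      have iterlem : ∀ (k : ℕ) (i v : Fin n), 0 < (A ^ k) i v → v = σ^[k] i := by
        intro k i v h
        obtain ⟨c, hc0, hck, hcw⟩ := walk_of_pos A k i v h
        have key : ∀ s, s ≤ k → c s = σ^[s] i := by
          intro s
          induction s with
          | zero => intro _; simpa using hc0
          | succ s ih =>
            intro hsk
            have h1 : c (s + 1) = σ (c s) := huniq (c s) (c (s+1)) (hcw s (by omega))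
            rw [h1, ih (by omega), ← Function.iterate_succ_apply' σ s i]
        rw [← hck]
        exact key k (le_refl k)
      have hsurj : Function.Surjective σ := by
        intro j
        obtain ⟨k, hk, hpos⟩ := hirr j j
        have hjj := iterlem k j j hpos
        obtain ⟨k', rfl⟩ : ∃ k', k = k' + 1 := ⟨k - 1, by omega⟩
        rw [Function.iterate_succ_apply'] at hjj
        exact ⟨σ^[k'] j, hjj.symm⟩
      have σinj : Function.Injective σ := Finite.injective_iff_surjective.mpr hsurj
      have npos : 0 < n := by omega
      set i₀ : Fin n := ⟨0, npos⟩ with hi₀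
      have orbit : ∀ v : Fin n, ∃ k, 0 < k ∧ σ^[k] i₀ = v := by
        intro v
        obtain ⟨k, hk, hpos⟩ := hirr i₀ v
        exact ⟨k, hk, (iterlem k i₀ v hpos).symm⟩
      have fkey : ∀ r s : ℕ, r < s → s < n → σ^[r] i₀ = σ^[s] i₀ → False := by
        intro r s hrs hsn heq
        set p := s - r with hp
        have hppos : 0 < p := by omega
        have hpn : p < n := by omega
        have hper : σ^[p] i₀ = i₀ := by
          have hsplit : σ^[s] i₀ = σ^[r] (σ^[p] i₀) := by
            rw [← Function.iterate_add_apply]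
            congr 1
            omega
          rw [hsplit] at heq
          exact (Function.Injective.iterate σinj r heq).symm
        have hmod : ∀ k : ℕ, σ^[k] i₀ = σ^[k % p] i₀ := by
          intro k
          conv_lhs => rw [show k = k % p + p * (k / p) from (Nat.mod_add_div k p).symm]
          rw [Function.iterate_add_apply, Function.iterate_mul]
          rw [Function.iterate_fixed hper (k / p)]
        have hsurjOn : Set.SurjOn (fun q : ℕ => σ^[q] i₀) ↑(Finset.range p)
            ↑(Finset.univ : Finset (Fin n)) := by
          intro v _
          obtain ⟨k, hk, hkv⟩ := orbit v
          refine ⟨k % p, ?_, ?_⟩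
          · simp [Nat.mod_lt k hppos]
          · show σ^[k % p] i₀ = v
            rw [← hmod k]; exact hkv
        have hcle := Finset.card_le_card_of_surjOn _ hsurjOn
        simp [Finset.card_range] at hcle
        omega
      set f : Fin n → Fin n := fun r => σ^[(r : ℕ)] i₀ with hf
      have finj : Function.Injective f := by
        intro r s heq
        by_contra hne
        have hne' : (r : ℕ) ≠ (s : ℕ) := fun h => hne (Fin.ext h)
        rcases Nat.lt_or_ge (r : ℕ) (s : ℕ) with h | h
        · exact fkey r s h s.isLt heq
        · exact fkey s r (by omega) r.isLt heq.symm
      have fbij : Function.Bijective f := Finite.injective_iff_bijective.mp finj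
      have hcycn : σ^[n] i₀ = i₀ := by
        obtain ⟨r, hr⟩ := fbij.surjective (σ^[n] i₀)
        rcases Nat.eq_zero_or_pos (r : ℕ) with h0 | hpos
        · have hfr : f r = i₀ := by rw [hf]; simp [h0]
          rw [← hr, hfr]
        · exfalso
          have hrn : (r : ℕ) < n := r.isLt
          have hre : σ^[(r : ℕ)] i₀ = σ^[n] i₀ := hr
          have key2 : ∀ a : ℕ, 0 < a → σ^[a] i₀ = σ (σ^[a - 1] i₀) := by
            intro a ha
            obtain ⟨b, rfl⟩ : ∃ b, a = b + 1 := ⟨a - 1, by omega⟩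
            rw [Function.iterate_succ_apply']
          rw [key2 (r : ℕ) hpos, key2 n (by omega)] at hre
          have hre2 := σinj hre
          exact fkey ((r : ℕ) - 1) (n - 1) (by omega) (by omega) hre2
      -- build the equivalence
      set E := Equiv.ofBijective f fbij with hE
      set e := E.symm with he
      have hEf : ∀ r : Fin n, E r = f r := fun r => rfl
      have hstep : ∀ i : Fin n, σ i = f (⟨((e i : ℕ) + 1) % n, Nat.mod_lt _ npos⟩ : Fin n) := by
        intro i
        have hfi : f (e i) = i := E.apply_symm_apply i
        have h1 : σ i = σ^[(e i : ℕ) + 1] i₀ := by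
          rw [Function.iterate_succ_apply']
          rw [show σ^[((e i : ℕ))] i₀ = f (e i) from rfl, hfi]
        rcases Nat.lt_or_ge ((e i : ℕ) + 1) n with hlt | hge
        · rw [hf]
          simp only []
          rw [Nat.mod_eq_of_lt hlt]
          exact h1
        · have hn1 : (e i : ℕ) + 1 = n := by
            have := (e i).isLt; omega
          rw [hf]
          simp only []
          rw [hn1, Nat.mod_self]
          rw [h1, hn1, hcycn]
          simp
      have hAe : A = (Cmat n).submatrix e e := by
        ext i j
        rw [Matrix.submatrix_apply]
        show A i j = Cmat n (e i) (e j)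
        have hiff : j = σ i ↔ ((e j : ℕ) = ((e i : ℕ) + 1) % n) := by
          constructor
          · intro hj
            rw [hj, hstep i]
            have : e (f (⟨((e i : ℕ) + 1) % n, Nat.mod_lt _ npos⟩ : Fin n))
                = (⟨((e i : ℕ) + 1) % n, Nat.mod_lt _ npos⟩ : Fin n) := E.symm_apply_apply _
            rw [this]
          · intro hj
            have hej : e j = (⟨((e i : ℕ) + 1) % n, Nat.mod_lt _ npos⟩ : Fin n) := Fin.ext hj
            have : j = f (e j) := (E.apply_symm_apply j).symm
            rw [this, hej, ← hstep i]
        rw [Cmat]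
        simp only [Matrix.of_apply]
        by_cases hj : j = σ i
        · rw [if_pos (hiff.mp hj)]
          rw [hj]
          exact le_antisymm (hA i (σ i)) (hσ i)
        · rw [if_neg (fun hc => hj (hiff.mpr hc))]
          by_contra hne
          have : 0 < A i j := Nat.pos_of_ne_zero hne
          exact hj (huniq i j this)
      exact hnc ⟨e, hAe⟩
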